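/- arXiv:1512.06812 — 2 statements merged into one kernel-verified Lean document; each statement's English description precedes it below -/
import Mathlib

section
/- Close–far symmetry: for k > 0 and y > 0, C_BS(k, 2k/y) = 1 - ∫₀^{C_BS(k,y)} (2k / Y_BS(k,u)²) du. -/
open MeasureTheory Real Filter Asymptotics Set

/-- Standard normal density. -/
noncomputable def phi (z : ℝ) : ℝ := (Real.sqrt (2 * Real.pi))⁻¹ * Real.exp (-z ^ 2 / 2)

/-- Standard normal CDF. -/
noncomputable def Phi (x : ℝ) : ℝ := ∫ z in Set.Iic x, phi z

/-- Black–Scholes normalized call price. -/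
noncomputable def CBS (k y : ℝ) : ℝ :=
  if 0 < y then Phi (-k / y + y / 2) - Real.exp k * Phi (-k / y - y / 2)
  else max (1 - Real.exp k) 0

/-- Implied total standard deviation: inverse of `CBS k` on `[0,∞)`. -/
noncomputable def YBS (k c : ℝ) : ℝ := sInf {y : ℝ | 0 ≤ y ∧ CBS k y = c}

/-- Inverse of the standard normal CDF on (0,1). -/
noncomputable def PhiInv (u : ℝ) : ℝ := sInf {x : ℝ | u ≤ Phi x}

/-- Extended-real quantile with the convention `Φ⁻¹(u) = +∞` for `u ≥ 1`, `-∞` for `u ≤ 0`. -/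
noncomputable def PhiInvE (u : ℝ) : EReal :=
  if 1 ≤ u then ⊤ else if u ≤ 0 then ⊥ else ((PhiInv u : ℝ) : EReal)

open Topology

lemma phi_pos (z : ℝ) : 0 < phi z := by
  unfold phi
  positivity

lemma phi_cont : Continuous phi := by
  unfold phi
  continuity

lemma phi_even (z : ℝ) : phi (-z) = phi z := by unfold phi; rw [neg_sq]

lemma integrable_phi : Integrable phi := by
  have h : Integrable (fun z : ℝ => Real.exp (-(1/2:ℝ) * z ^ 2)) := integrable_exp_neg_mul_sq (by norm_num)
  have := h.const_mul (Real.sqrt (2 * Real.pi))⁻¹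
  refine this.congr (Filter.EventuallyEq.of_eq ?_)
  funext z
  unfold phi
  ring_nf
  
lemma integral_phi : ∫ z, phi z = 1 := by
  have h := integral_gaussian (1/2 : ℝ)
  have h2 : ∫ z : ℝ, Real.exp (-z ^ 2 / 2) = Real.sqrt (2 * Real.pi) := by
    rw [show (2 * Real.pi) = Real.pi / (1/2 : ℝ) by ring, ← h]
    congr 1; ext z; ring_nf
  unfold phi
  rw [integral_const_mul, h2, inv_mul_cancel₀]
  positivity

lemma Phi_sub_Phi (a b : ℝ) : Phi b - Phi a = ∫ z in a..b, phi z := by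
  unfold Phi
  exact intervalIntegral.integral_Iic_sub_Iic integrable_phi.integrableOn integrable_phi.integrableOn

lemma hasDerivAt_Phi (x : ℝ) : HasDerivAt Phi (phi x) x := by
  have h : HasDerivAt (fun u => ∫ z in (0:ℝ)..u, phi z) (phi x) x := by
    exact intervalIntegral.integral_hasDerivAt_right
      (phi_cont.intervalIntegrable _ _)
      (phi_cont.stronglyMeasurableAtFilter _ _)
      phi_cont.continuousAt
  have : HasDerivAt (fun u => Phi 0 + ∫ z in (0:ℝ)..u, phi z) (phi x) x := h.const_add _
  refine this.congr_of_eventuallyEq (Filter.EventuallyEq.of_eq ?_)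
  funext u
  have := Phi_sub_Phi 0 u
  linarith

lemma Phi_cont : Continuous Phi := by
  have : ∀ x, ContinuousAt Phi x := fun x => (hasDerivAt_Phi x).continuousAt
  exact continuous_iff_continuousAt.2 this

lemma Phi_tendsto_atTop : Tendsto Phi atTop (𝓝 1) := by
  have h : AECover (volume : Measure ℝ) atTop (fun i : ℝ => Iic i) :=
    aecover_Iic tendsto_id
  have := h.integral_tendsto_of_countably_generated integrable_phi
  rwa [integral_phi] at this

lemma Phi_tendsto_atBot : Tendsto Phi atBot (𝓝 0) := by
  have h : AECover (volume : Measure ℝ) atBot (fun i : ℝ => Ioi i) :=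
    aecover_Ioi tendsto_id
  have h2 := h.integral_tendsto_of_countably_generated integrable_phi
  rw [integral_phi] at h2
  have key : ∀ x : ℝ, Phi x = 1 - ∫ z in Ioi x, phi z := by
    intro x
    have := integral_add_compl (measurableSet_Iic (a := x)) integrable_phi
    rw [compl_Iic, integral_phi] at this
    unfold Phi; linarith
  have : Tendsto (fun x : ℝ => 1 - ∫ z in Ioi x, phi z) atBot (𝓝 (1 - 1)) :=
    (tendsto_const_nhds).sub h2
  simp only [sub_self] at this
  exact this.congr fun x => (key x).symm

lemma Phi_nonneg (x : ℝ) : 0 ≤ Phi x :=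
  setIntegral_nonneg measurableSet_Iic (fun z _ => (phi_pos z).le)

lemma Phi_strictMono : StrictMono Phi := by
  intro a b hab
  have h : 0 < ∫ z in a..b, phi z :=
    intervalIntegral.intervalIntegral_pos_of_pos (phi_cont.intervalIntegrable a b)
      (fun z => phi_pos z) hab
  have := Phi_sub_Phi a b
  linarith

lemma Phi_pos (x : ℝ) : 0 < Phi x :=
  lt_of_le_of_lt (Phi_nonneg (x - 1)) (Phi_strictMono (by linarith))

lemma Phi_lt_one (x : ℝ) : Phi x < 1 := by
  have key : Phi x = 1 - ∫ z in Ioi x, phi z := by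
    have := integral_add_compl (measurableSet_Iic (a := x)) integrable_phi
    rw [compl_Iic, integral_phi] at this
    unfold Phi; linarith
  have h1 : Phi (x + 1) - Phi x = ∫ z in Ioc x (x+1), phi z := by
    rw [Phi_sub_Phi, intervalIntegral.integral_of_le (by linarith)]
  have h2 : (∫ z in Ioc x (x+1), phi z) ≤ ∫ z in Ioi x, phi z := by
    apply setIntegral_mono_set integrable_phi.integrableOn
      (Filter.Eventually.of_forall fun z => (phi_pos z).le)
    exact HasSubset.Subset.eventuallyLE Ioc_subset_Ioi_self
  have h3 : Phi x < Phi (x + 1) := Phi_strictMono (by linarith)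
  linarith

lemma exp_mul_phi (k y : ℝ) (hy : y ≠ 0) :
    Real.exp k * phi (-k / y - y / 2) = phi (-k / y + y / 2) := by
  unfold phi
  rw [← mul_assoc, mul_comm (Real.exp k), mul_assoc, ← Real.exp_add]
  congr 2
  field_simp
  ring

/-- derivative of d1 -/
lemma hasDerivAt_d1 (k y : ℝ) (hy : 0 < y) :
    HasDerivAt (fun x => -k / x + x / 2) (k / y ^ 2 + 1 / 2) y := by
  have h1 : HasDerivAt (fun x : ℝ => -k / x) (k / y ^ 2) y := by
    have h := (hasDerivAt_inv (ne_of_gt hy)).const_mul (-k)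
    have h2 : HasDerivAt (fun x : ℝ => -k * x⁻¹) (k / y ^ 2) y := by
      exact h.congr_deriv (by ring)
    refine h2.congr_of_eventuallyEq (Filter.EventuallyEq.of_eq ?_)
    funext x
    rw [div_eq_mul_inv]
  exact h1.add ((hasDerivAt_id y).div_const 2)

lemma hasDerivAt_d2 (k y : ℝ) (hy : 0 < y) :
    HasDerivAt (fun x => -k / x - x / 2) (k / y ^ 2 - 1 / 2) y := by
  have h1 : HasDerivAt (fun x : ℝ => -k / x) (k / y ^ 2) y := by
    have h := (hasDerivAt_inv (ne_of_gt hy)).const_mul (-k)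
    have h2 : HasDerivAt (fun x : ℝ => -k * x⁻¹) (k / y ^ 2) y := by
      exact h.congr_deriv (by ring)
    refine h2.congr_of_eventuallyEq (Filter.EventuallyEq.of_eq ?_)
    funext x
    rw [div_eq_mul_inv]
  exact h1.sub ((hasDerivAt_id y).div_const 2)

lemma hasDerivAt_CBS (k y : ℝ) (hy : 0 < y) :
    HasDerivAt (CBS k) (phi (-k / y + y / 2)) y := by
  have hF : HasDerivAt (fun x => Phi (-k / x + x / 2) - Real.exp k * Phi (-k / x - x / 2))
      (phi (-k / y + y / 2) * (k / y ^ 2 + 1 / 2)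
        - Real.exp k * (phi (-k / y - y / 2) * (k / y ^ 2 - 1 / 2))) y := by
    have h1 := (hasDerivAt_Phi (-k / y + y / 2)).comp y (hasDerivAt_d1 k y hy)
    have h2 := ((hasDerivAt_Phi (-k / y - y / 2)).comp y (hasDerivAt_d2 k y hy)).const_mul
      (Real.exp k)
    exact h1.sub h2
  have heq : CBS k =ᶠ[𝓝 y] fun x => Phi (-k / x + x / 2) - Real.exp k * Phi (-k / x - x / 2) := by
    filter_upwards [Ioi_mem_nhds hy] with x hx
    simp only [CBS, if_pos (mem_Ioi.mp hx)]
  have hval : phi (-k / y + y / 2) * (k / y ^ 2 + 1 / 2)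
      - Real.exp k * (phi (-k / y - y / 2) * (k / y ^ 2 - 1 / 2)) = phi (-k / y + y / 2) := by
    rw [← mul_assoc, exp_mul_phi k y (ne_of_gt hy)]
    ring
  rw [hval] at hF
  exact hF.congr_of_eventuallyEq heq

lemma CBS_eq_on_pos (k y : ℝ) (hy : 0 < y) :
    CBS k y = Phi (-k / y + y / 2) - Real.exp k * Phi (-k / y - y / 2) := by
  simp only [CBS, if_pos hy]

lemma tendsto_CBS_atTop (k : ℝ) : Tendsto (CBS k) atTop (𝓝 1) := by
  have hd1 : Tendsto (fun y : ℝ => -k / y + y / 2) atTop atTop := by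
    exact Filter.Tendsto.add_atTop (C := 0) (Tendsto.div_atTop tendsto_const_nhds tendsto_id)
      (tendsto_id.atTop_div_const (by norm_num))
  have hd2 : Tendsto (fun y : ℝ => -k / y - y / 2) atTop atBot := by
    have hg : Tendsto (fun y : ℝ => -(y / 2)) atTop atBot :=
      tendsto_neg_atBot_iff.mpr (tendsto_id.atTop_div_const (by norm_num))
    have hf : Tendsto (fun y : ℝ => -k / y) atTop (𝓝 0) :=
      Tendsto.div_atTop tendsto_const_nhds tendsto_id
    exact (Filter.Tendsto.add_atBot (C := 0) hf hg).congr (fun y => by ring)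
  have h : Tendsto (fun y => Phi (-k / y + y / 2) - Real.exp k * Phi (-k / y - y / 2))
      atTop (𝓝 (1 - Real.exp k * 0)) :=
    (Phi_tendsto_atTop.comp hd1).sub ((Phi_tendsto_atBot.comp hd2).const_mul _)
  rw [mul_zero, sub_zero] at h
  refine h.congr' ?_
  filter_upwards [Ioi_mem_atTop (0:ℝ)] with y hy
  exact (CBS_eq_on_pos k y (mem_Ioi.mp hy)).symm

lemma tendsto_CBS_zero (k : ℝ) (hk : 0 < k) : Tendsto (CBS k) (𝓝[>] 0) (𝓝 0) := by
  have hinv : Tendsto (fun y : ℝ => y⁻¹) (𝓝[>] 0) atTop := tendsto_inv_nhdsGT_zero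
  have hd1 : Tendsto (fun y : ℝ => -k / y + y / 2) (𝓝[>] 0) atBot := by
    have h1 : Tendsto (fun y : ℝ => -k / y) (𝓝[>] 0) atBot := by
      have : Tendsto (fun y : ℝ => -k * y⁻¹) (𝓝[>] 0) atBot :=
        hinv.const_mul_atTop_of_neg (by linarith)
      exact this.congr (fun y => by rw [div_eq_mul_inv])
    have h2 : Tendsto (fun y : ℝ => y / 2) (𝓝[>] (0:ℝ)) (𝓝 0) := by
      have : Tendsto (fun y : ℝ => y / 2) (𝓝 0) (𝓝 (0/2)) :=
        (continuous_id.div_const 2).tendsto 0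
      simpa using this.mono_left nhdsWithin_le_nhds
    exact Filter.Tendsto.atBot_add (C := 0) h1 h2
  have hd2 : Tendsto (fun y : ℝ => -k / y - y / 2) (𝓝[>] 0) atBot := by
    have h1 : Tendsto (fun y : ℝ => -k / y) (𝓝[>] 0) atBot := by
      have : Tendsto (fun y : ℝ => -k * y⁻¹) (𝓝[>] 0) atBot :=
        hinv.const_mul_atTop_of_neg (by linarith)
      exact this.congr (fun y => by rw [div_eq_mul_inv])
    have h2 : Tendsto (fun y : ℝ => -(y / 2)) (𝓝[>] (0:ℝ)) (𝓝 0) := by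
      have : Tendsto (fun y : ℝ => -(y / 2)) (𝓝 0) (𝓝 (-(0/2))) :=
        ((continuous_id.div_const 2).neg).tendsto 0
      simpa using this.mono_left nhdsWithin_le_nhds
    exact (Filter.Tendsto.atBot_add (C := 0) h1 h2).congr (fun y => by ring)
  have h : Tendsto (fun y => Phi (-k / y + y / 2) - Real.exp k * Phi (-k / y - y / 2))
      (𝓝[>] 0) (𝓝 (0 - Real.exp k * 0)) :=
    (Phi_tendsto_atBot.comp hd1).sub ((Phi_tendsto_atBot.comp hd2).const_mul _)
  rw [mul_zero, sub_zero] at h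
  refine h.congr' ?_
  filter_upwards [self_mem_nhdsWithin] with y hy
  exact (CBS_eq_on_pos k y (mem_Ioi.mp hy)).symm

lemma CBS_strictMonoOn (k : ℝ) : StrictMonoOn (CBS k) (Ioi 0) := by
  apply strictMonoOn_of_deriv_pos (convex_Ioi 0)
  · intro x hx
    exact (hasDerivAt_CBS k x (mem_Ioi.mp hx)).continuousAt.continuousWithinAt
  · intro x hx
    rw [interior_Ioi] at hx
    rw [(hasDerivAt_CBS k x (mem_Ioi.mp hx)).deriv]
    exact phi_pos _

lemma CBS_nonneg (k y : ℝ) (hk : 0 < k) (hy : 0 < y) : 0 ≤ CBS k y := by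
  refine le_of_tendsto (tendsto_CBS_zero k hk) ?_
  filter_upwards [Ioo_mem_nhdsGT_of_mem (left_mem_Ico.mpr hy)] with t ht
  exact (CBS_strictMonoOn k (mem_Ioi.mpr ht.1) (mem_Ioi.mpr hy) ht.2).le

lemma CBS_pos (k y : ℝ) (hk : 0 < k) (hy : 0 < y) : 0 < CBS k y :=
  lt_of_le_of_lt (CBS_nonneg k (y/2) hk (by linarith))
    (CBS_strictMonoOn k (mem_Ioi.mpr (by linarith)) (mem_Ioi.mpr hy) (by linarith))

lemma YBS_CBS (k x : ℝ) (hk : 0 < k) (hx : 0 < x) : YBS k (CBS k x) = x := by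
  have hset : {y : ℝ | 0 ≤ y ∧ CBS k y = CBS k x} = {x} := by
    ext y
    simp only [mem_setOf_eq, mem_singleton_iff]
    constructor
    · rintro ⟨hy0, hyx⟩
      rcases eq_or_lt_of_le hy0 with h | h
      · exfalso
        have h0 : CBS k 0 = 0 := by
          rw [CBS, if_neg (lt_irrefl 0), max_eq_right (by linarith [Real.one_le_exp hk.le])]
        rw [← h, h0] at hyx
        exact absurd hyx.symm (ne_of_gt (CBS_pos k x hk hx))
      · exact (CBS_strictMonoOn k).injOn (mem_Ioi.mpr h) (mem_Ioi.mpr hx) hyx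
    · rintro rfl
      exact ⟨hx.le, rfl⟩
  rw [YBS, hset, csInf_singleton]

lemma CBS_image (k y : ℝ) (hk : 0 < k) (hy : 0 < y) :
    CBS k '' Ioc 0 y = Ioc 0 (CBS k y) := by
  apply Subset.antisymm
  · rintro _ ⟨x, hx, rfl⟩
    refine ⟨CBS_pos k x hk hx.1, ?_⟩
    rcases eq_or_lt_of_le hx.2 with h | h
    · rw [h]
    · exact (CBS_strictMonoOn k (mem_Ioi.mpr hx.1) (mem_Ioi.mpr hy) h).le
  · rintro u ⟨hu0, huy⟩
    have hev : ∀ᶠ t in 𝓝[>] (0:ℝ), CBS k t < u ∧ t ∈ Ioo 0 y := by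
      refine Filter.Eventually.and ?_ ?_
      · exact (tendsto_CBS_zero k hk).eventually_lt_const hu0
      · exact Ioo_mem_nhdsGT_of_mem (left_mem_Ico.mpr hy)
    obtain ⟨t, htu, ht⟩ := hev.exists
    have hcont : ContinuousOn (CBS k) (Icc t y) := by
      intro x hx
      exact (hasDerivAt_CBS k x (lt_of_lt_of_le ht.1 hx.1)).continuousAt.continuousWithinAt
    have hIVT := intermediate_value_Icc ht.2.le hcont
    have humem : u ∈ Icc (CBS k t) (CBS k y) := ⟨htu.le, huy⟩
    obtain ⟨x, hx, hxu⟩ := hIVT humem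
    exact ⟨x, ⟨lt_of_lt_of_le ht.1 hx.1, hx.2⟩, hxu⟩

theorem stmt_4 (k y : ℝ) (hk : 0 < k) (hy : 0 < y) :
    CBS k (2 * k / y) = 1 - ∫ u in (0:ℝ)..(CBS k y), 2 * k / (YBS k u) ^ 2 := by
  set g : ℝ → ℝ := fun u => 2 * k / (YBS k u) ^ 2 with hg
  set h : ℝ → ℝ := fun x => phi (-k / x + x / 2) * (2 * k / x ^ 2) with hh
  set c : ℝ := 2 * k / y with hc
  have hc0 : 0 < c := by positivity
  -- Step A : substitute u = CBS k x
  have stepA : ∫ u in Ioc 0 (CBS k y), g u = ∫ x in Ioc 0 y, h x := by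
    have hA := integral_image_eq_integral_abs_deriv_smul (f := CBS k)
      (f' := fun x => phi (-k / x + x / 2)) (measurableSet_Ioc (a := (0:ℝ)) (b := y))
      (fun x hx => (hasDerivAt_CBS k x hx.1).hasDerivWithinAt)
      (((CBS_strictMonoOn k).injOn).mono Ioc_subset_Ioi_self) g
    rw [CBS_image k y hk hy] at hA
    rw [hA]
    refine setIntegral_congr_fun measurableSet_Ioc fun x hx => ?_
    have hx0 : 0 < x := hx.1
    rw [smul_eq_mul, abs_of_pos (phi_pos _), hg, hh]
    simp only
    rw [YBS_CBS k x hk hx0]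
  -- Step B : substitute x = 2k/t
  have stepB : ∫ x in Ioo 0 y, h x = ∫ x in Ioi c, phi (-k / x + x / 2) := by
    have himg : (fun x : ℝ => 2 * k / x) '' Ioi c = Ioo 0 y := by
      ext t
      constructor
      · rintro ⟨x, hx, rfl⟩
        have hx0 : 0 < x := lt_trans hc0 hx
        constructor
        · positivity
        · have hx' : 2 * k / y < x := mem_Ioi.mp hx
          rw [div_lt_iff₀ hx0]
          rw [div_lt_iff₀ hy] at hx'
          nlinarith
      · rintro ⟨ht0, hty⟩
        refine ⟨2 * k / t, ?_, by field_simp⟩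
        rw [hc, mem_Ioi]
        exact div_lt_div_of_pos_left (by positivity) ht0 hty
      
    have hderiv : ∀ x ∈ Ioi c, HasDerivWithinAt (fun x : ℝ => 2 * k / x)
        (-(2 * k) / x ^ 2) (Ioi c) x := by
      intro x hx
      have hx0 : 0 < x := lt_trans hc0 hx
      have h1 := (hasDerivAt_inv (ne_of_gt hx0)).const_mul (2 * k)
      have h2 : HasDerivAt (fun x : ℝ => 2 * k / x) (-(2 * k) / x ^ 2) x := by
        have : (fun x : ℝ => 2 * k / x) = fun x : ℝ => 2 * k * x⁻¹ := by
          funext z; rw [div_eq_mul_inv]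
        rw [this]
        exact h1.congr_deriv (by ring)
      exact h2.hasDerivWithinAt
    have hinj : InjOn (fun x : ℝ => 2 * k / x) (Ioi c) := by
      intro a ha b hb hab
      have ha0 : 0 < a := lt_trans hc0 ha
      have hb0 : 0 < b := lt_trans hc0 hb
      simp only at hab
      field_simp at hab
      linarith
    have hB := integral_image_eq_integral_abs_deriv_smul measurableSet_Ioi hderiv hinj h
    rw [himg] at hB
    rw [hB]
    refine setIntegral_congr_fun measurableSet_Ioi fun x hx => ?_
    have hx0 : 0 < x := lt_trans hc0 hx
    rw [smul_eq_mul, hh]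
    simp only
    have e1 : -k / (2 * k / x) + (2 * k / x) / 2 = -(-k / x + x / 2) := by
      field_simp; ring
    rw [e1, phi_even]
    have e2 : 2 * k / (2 * k / x) ^ 2 = x ^ 2 / (2 * k) := by
      rw [div_pow]; field_simp
    rw [e2]
    have e3 : |(-(2 * k) / x ^ 2)| = 2 * k / x ^ 2 := by
      rw [neg_div, abs_neg, abs_of_pos (by positivity)]
    rw [e3]
    field_simp
  -- Step C : FTC on (c, ∞)
  have stepC : ∫ x in Ioi c, phi (-k / x + x / 2) = 1 - CBS k c := by
    apply integral_Ioi_of_hasDerivAt_of_nonneg' (g := CBS k)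
    · intro x hx
      exact hasDerivAt_CBS k x (lt_of_lt_of_le hc0 hx)
    · exact fun x _ => (phi_pos _).le
    · exact tendsto_CBS_atTop k
  -- glue
  have h1 : (∫ u in (0:ℝ)..(CBS k y), g u) = ∫ u in Ioc 0 (CBS k y), g u :=
    intervalIntegral.integral_of_le (CBS_pos k y hk hy).le
  have h2 : ∫ x in Ioc 0 y, h x = ∫ x in Ioo 0 y, h x :=
    integral_Ioc_eq_integral_Ioo
  rw [h1, stepA, h2, stepB, stepC]
  ring
end

section
/- For k > 0, ∫₀^∞ φ(-k/y + y/2)/y dy = ∫_{-∞}^∞ φ(x)/√(x² + 2k) dx, where φ is the standard normal density. -/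
open MeasureTheory Real Filter Asymptotics Set

theorem stmt_8 (k : ℝ) (hk : 0 < k) :
    ∫ y in Set.Ioi (0:ℝ), phi (-k / y + y / 2) / y =
      ∫ x : ℝ, phi x / Real.sqrt (x ^ 2 + 2 * k) := by
  set g : ℝ → ℝ := fun x => x + Real.sqrt (x ^ 2 + 2 * k) with hg
  set g' : ℝ → ℝ := fun x => 1 + x / Real.sqrt (x ^ 2 + 2 * k) with hg'
  have hspos : ∀ x : ℝ, 0 < Real.sqrt (x ^ 2 + 2 * k) := fun x =>
    Real.sqrt_pos.2 (by positivity)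
  have hs_gt : ∀ x : ℝ, |x| < Real.sqrt (x ^ 2 + 2 * k) := by
    intro x
    have : |x| = Real.sqrt (x ^ 2) := by rw [Real.sqrt_sq_eq_abs]
    rw [this]
    exact Real.sqrt_lt_sqrt (by positivity) (by linarith)
  have hgpos : ∀ x : ℝ, 0 < g x := by
    intro x
    have := hs_gt x
    have := neg_abs_le x
    simp only [hg]
    linarith
  have hg'pos : ∀ x : ℝ, 0 < g' x := by
    intro x
    have h1 := hs_gt x
    have h2 := hspos x
    have : -1 < x / Real.sqrt (x ^ 2 + 2 * k) := by
      rw [lt_div_iff₀ h2]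
      have := neg_abs_le x
      linarith
    simp only [hg']
    linarith
  have hsq : ∀ x : ℝ, Real.sqrt (x ^ 2 + 2 * k) ^ 2 = x ^ 2 + 2 * k := fun x =>
    Real.sq_sqrt (by positivity)
  -- derivative
  have hderiv : ∀ x : ℝ, HasDerivAt g (g' x) x := by
    intro x
    have h1 : HasDerivAt (fun x : ℝ => x ^ 2 + 2 * k) (2 * x) x := by
      simpa using ((hasDerivAt_pow 2 x).add_const (2 * k))
    have h2 : HasDerivAt (fun x : ℝ => Real.sqrt (x ^ 2 + 2 * k))
        (1 / (2 * Real.sqrt (x ^ 2 + 2 * k)) * (2 * x)) x :=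
      (Real.hasDerivAt_sqrt (by positivity)).comp x h1
    have h3 := (hasDerivAt_id x).add h2
    convert h3 using 1
    have := (hspos x).ne'
    show 1 + x / √(x ^ 2 + 2 * k) = 1 + 1 / (2 * √(x ^ 2 + 2 * k)) * (2 * x)
    rw [div_mul_eq_mul_div, one_mul, mul_div_mul_left _ _ two_ne_zero]
    all_goals rfl
  -- injectivity: left inverse y ↦ y/2 - k/y
  have hinj : Function.Injective g := by
    have hli : ∀ x : ℝ, g x / 2 - k / g x = x := by
      intro x
      have hgx := (hgpos x).ne'
      have hsqx := hsq x
      have hs := (hspos x).ne'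
      field_simp [hg]
      nlinarith [hsq x]
    intro a b hab
    have := hli a
    rw [hab, hli b] at this
    exact this.symm
  -- image
  have himg : g '' univ = Ioi (0:ℝ) := by
    ext y
    simp only [image_univ, mem_range, mem_Ioi]
    constructor
    · rintro ⟨x, rfl⟩; exact hgpos x
    · intro hy
      refine ⟨y / 2 - k / y, ?_⟩
      have hy' : y ≠ 0 := hy.ne'
      have hval : (y / 2 - k / y) ^ 2 + 2 * k = (y / 2 + k / y) ^ 2 := by
        field_simp; ring
      have hpos : 0 ≤ y / 2 + k / y := by positivity
      simp only [hg, hval, Real.sqrt_sq hpos]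
      ring
  have key := integral_image_eq_integral_abs_deriv_smul MeasurableSet.univ
    (fun x _ => (hderiv x).hasDerivWithinAt) (hinj.injOn)
    (fun y => phi (-k / y + y / 2) / y)
  rw [himg] at key
  rw [key, MeasureTheory.setIntegral_univ]
  congr 1
  ext x
  have hgx := hgpos x
  have hs := hspos x
  have habs : |g' x| = g' x := abs_of_pos (hg'pos x)
  rw [habs]
  have harg : -k / g x + g x / 2 = x := by
    have hgx' := hgx.ne'
    have : g x / 2 - k / g x = x := by
      field_simp [hg]
      nlinarith [hsq x]
    rw [neg_div]; linarith [this]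
  rw [harg]
  have hs' := hs.ne'
  have hgx' := hgx.ne'
  simp only [smul_eq_mul, hg', hg]
  have hgx'' : x + √(x ^ 2 + 2 * k) ≠ 0 := hgx'
  field_simp
  ring
end
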